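/- Let C be a closed polygonal curve with four vertices p_0, p_1, p_2, p_3 = p_0 in the Euclidean plane, where p_0, p_1, p_2 are not collinear (a nondegenerate triangle), and suppose the interior angle of the triangle at p_0, i.e. the angle between the vectors p_1 − p_0 and p_2 − p_0, is strictly less than π/3. Then the iterated arclength respacings of C converge to a single point: there exists q ∈ ℝ^2 such that lim_{n→∞} f^n(p_k) = q for every k = 0, 1, 2, 3. -/

import Mathlib

open Finset Filter

noncomputable section

/-- The length of the polygonal curve with vertices `p 0, …, p m`
(also the arclength distance from `p 0` to `p m` along the curve). -/
def polyLength {dim : ℕ} (p : ℕ → EuclideanSpace ℝ (Fin dim)) (m : ℕ) : ℝ :=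
  ∑ i ∈ Finset.range m, ‖p (i + 1) - p i‖

/-- `P` is the arclength-parameterized linear interpolation of the polygonal
curve with vertices `p 0, …, p m`:
`P ((1-t)·d_{k-1} + t·d_k) = (1-t)·p_{k-1} + t·p_k` for `t ∈ [0,1]`, `k = 1, …, m`,
where `d_k = polyLength p k` is the arclength up to vertex `k`. -/
def IsArcParam {dim : ℕ} (p : ℕ → EuclideanSpace ℝ (Fin dim)) (m : ℕ)
    (P : ℝ → EuclideanSpace ℝ (Fin dim)) : Prop :=
  ∀ k : ℕ, 1 ≤ k → k ≤ m → ∀ t : ℝ, 0 ≤ t → t ≤ 1 →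
    P ((1 - t) * polyLength p (k - 1) + t * polyLength p k)
      = (1 - t) • p (k - 1) + t • p k

/-- The polygonal curve with vertices `p 0, …, p m` is equilateral:
all consecutive interpoint distances agree. -/
def IsEquilateral {dim : ℕ} (p : ℕ → EuclideanSpace ℝ (Fin dim)) (m : ℕ) : Prop :=
  ∀ k l : ℕ, 1 ≤ k → k ≤ m → 1 ≤ l → l ≤ m →
    ‖p k - p (k - 1)‖ = ‖p l - p (l - 1)‖

/-- `q 0, …, q m` are the vertices of the arclength respacing `f(C)` of the
polygonal curve `C` with vertices `p 0, …, p m`: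
`q k = P (k·L(C)/m)` where `P` is the arclength parameterization of `C`;
by convention `f(C) := C` when `L(C) = 0`. -/
def Respaces {dim : ℕ} (m : ℕ) (p q : ℕ → EuclideanSpace ℝ (Fin dim)) : Prop :=
  (polyLength p m = 0 ∧ ∀ k ≤ m, q k = p k) ∨
  (0 < polyLength p m ∧ ∃ P : ℝ → EuclideanSpace ℝ (Fin dim), IsArcParam p m P ∧
    ∀ k ≤ m, q k = P ((k : ℝ) * polyLength p m / m))

open RealInnerProductSpace

lemma polyLength_nonneg {dim : ℕ} (p : ℕ → EuclideanSpace ℝ (Fin dim)) (m : ℕ) :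
    0 ≤ polyLength p m :=
  Finset.sum_nonneg fun _ _ => norm_nonneg _

lemma polyLength_mono {dim : ℕ} (p : ℕ → EuclideanSpace ℝ (Fin dim)) {k m : ℕ} (h : k ≤ m) :
    polyLength p k ≤ polyLength p m :=
  Finset.sum_le_sum_of_subset_of_nonneg (Finset.range_subset_range.2 h) (fun _ _ _ => norm_nonneg _)

lemma seg_param (a b s : ℝ) (h1 : a ≤ s) (h2 : s ≤ b) :
    ∃ t : ℝ, 0 ≤ t ∧ t ≤ 1 ∧ (1 - t) * a + t * b = s := by
  rcases eq_or_lt_of_le (h1.trans h2) with h | h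
  · exact ⟨0, le_rfl, zero_le_one, by nlinarith⟩
  · refine ⟨(s - a)/(b - a), div_nonneg (by linarith) (by linarith), ?_, ?_⟩
    · rw [div_le_one (by linarith)]; linarith
    · have hba : b - a ≠ 0 := by linarith
      field_simp
      ring

lemma locate (d : ℕ → ℝ) (h12 : d 1 ≤ d 2) (h23 : d 2 ≤ d 3)
    (s : ℝ) (hs0 : d 0 ≤ s) (hs1 : s ≤ d 3) :
    ∃ k, 1 ≤ k ∧ k ≤ 3 ∧ ∃ t : ℝ, 0 ≤ t ∧ t ≤ 1 ∧ (1 - t) * d (k - 1) + t * d k = s := by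
  rcases le_or_gt s (d 1) with h | h
  · exact ⟨1, le_rfl, by norm_num, seg_param _ _ _ hs0 h⟩
  rcases le_or_gt s (d 2) with h2 | h2
  · exact ⟨2, by norm_num, by norm_num, seg_param _ _ _ h.le h2⟩
  · exact ⟨3, by norm_num, le_rfl, seg_param _ _ _ h2.le hs1⟩

set_option maxHeartbeats 2000000 in
lemma coneInner {v1 v2 u v : EuclideanSpace ℝ (Fin 2)} {γ : ℝ} (hγ0 : 0 ≤ γ) (hγ1 : γ ≤ 1)
    (hg : ⟪v1, v2⟫ = γ * (‖v1‖ * ‖v2‖))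
    (hu : ∃ a b : ℝ, 0 ≤ a ∧ 0 ≤ b ∧ u = a • v1 + b • v2)
    (hv : ∃ a b : ℝ, 0 ≤ a ∧ 0 ≤ b ∧ v = a • v1 + b • v2) :
    γ * (‖u‖ * ‖v‖) ≤ ⟪u, v⟫ := by
  obtain ⟨a, b, ha, hb, rfl⟩ := hu
  obtain ⟨c, d, hc, hd, rfl⟩ := hv
  have hn1 : (0:ℝ) ≤ ‖v1‖ := norm_nonneg _
  have hn2 : (0:ℝ) ≤ ‖v2‖ := norm_nonneg _
  set n1 := ‖v1‖ with hn1d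
  set n2 := ‖v2‖ with hn2d
  have hinner : ∀ x y z w : ℝ, ⟪x • v1 + y • v2, z • v1 + w • v2⟫
      = x*z*n1^2 + (x*w + y*z)*(γ*(n1*n2)) + y*w*n2^2 := by
    intro x y z w
    simp only [inner_add_left, inner_add_right, real_inner_smul_left, real_inner_smul_right,
      real_inner_self_eq_norm_sq, real_inner_comm v1 v2, hg]
    ring
  have hnormsq : ∀ x y : ℝ, ‖x • v1 + y • v2‖^2
      = x^2*n1^2 + 2*(x*y)*(γ*(n1*n2)) + y^2*n2^2 := by
    intro x y
    rw [← real_inner_self_eq_norm_sq, hinner]; ring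
  have hI0 : (0:ℝ) ≤ ⟪a • v1 + b • v2, c • v1 + d • v2⟫ := by
    rw [hinner]
    have : (0:ℝ) ≤ γ*(n1*n2) := by positivity
    positivity
  have hsq : (γ * (‖a • v1 + b • v2‖ * ‖c • v1 + d • v2‖))^2
      ≤ ⟪a • v1 + b • v2, c • v1 + d • v2⟫^2 := by
    have e1 := hnormsq a b
    have e2 := hnormsq c d
    rw [hinner, mul_pow, mul_pow, e1, e2]
    have key : (a*c*n1^2 + (a*d + b*c)*(γ*(n1*n2)) + b*d*n2^2)^2
        - γ^2 * ((a^2*n1^2 + 2*(a*b)*(γ*(n1*n2)) + b^2*n2^2) * (c^2*n1^2 + 2*(c*d)*(γ*(n1*n2)) + d^2*n2^2))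
        = (1 - γ^2) * ((a*c*n1^2 + b*d*n2^2)^2 + 2*γ*(a*c*n1^2 + b*d*n2^2)*((a*d + b*c)*(n1*n2))
           + 4*γ^2*(a*b*c*d)*(n1*n2)^2) := by ring
    have hX : (0:ℝ) ≤ a*c*n1^2 + b*d*n2^2 := by positivity
    have hY : (0:ℝ) ≤ (a*d + b*c)*(n1*n2) := by positivity
    have habcd : (0:ℝ) ≤ a*b*c*d := by positivity
    have h1g : (0:ℝ) ≤ 1 - γ^2 := by nlinarith
    have hbr : (0:ℝ) ≤ (a*c*n1^2 + b*d*n2^2)^2 + 2*γ*(a*c*n1^2 + b*d*n2^2)*((a*d + b*c)*(n1*n2))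
        + 4*γ^2*(a*b*c*d)*(n1*n2)^2 := by
      refine add_nonneg (add_nonneg (sq_nonneg _) ?_) ?_
      · exact mul_nonneg (mul_nonneg (mul_nonneg (by norm_num) hγ0) hX) hY
      · exact mul_nonneg (mul_nonneg (by positivity) habcd) (sq_nonneg _)
    linarith [mul_nonneg h1g hbr]
  have hL0 : (0:ℝ) ≤ γ * (‖a • v1 + b • v2‖ * ‖c • v1 + d • v2‖) := by positivity
  exact le_of_pow_le_pow_left₀ two_ne_zero hI0 hsq

lemma chord {u v : EuclideanSpace ℝ (Fin 2)} {γ δ : ℝ}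
    (hγ : 1/2 < γ) (hδ0 : 0 ≤ δ) (hδ : δ^2 = 2*(1-γ))
    (h : γ * (‖u‖ * ‖v‖) ≤ ⟪u, v⟫) (hr : ‖u‖ ≤ ‖v‖) :
    ‖u - v‖ ≤ δ * ‖u‖ + (‖v‖ - ‖u‖) := by
  have hδγ : 1 - γ ≤ δ := by nlinarith
  have hrhs : 0 ≤ δ * ‖u‖ + (‖v‖ - ‖u‖) := by
    have := norm_nonneg u
    nlinarith
  have hexp : ‖u - v‖^2 = ‖u‖^2 - 2*⟪u, v⟫ + ‖v‖^2 := norm_sub_sq_real u v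
  have hsq : ‖u - v‖^2 ≤ (δ * ‖u‖ + (‖v‖ - ‖u‖))^2 := by
    rw [hexp]
    nlinarith [norm_nonneg u, norm_nonneg v,
      mul_nonneg (mul_nonneg (norm_nonneg u) (sub_nonneg.2 hr)) (by linarith : (0:ℝ) ≤ δ - (1 - γ))]
  exact le_of_pow_le_pow_left₀ two_ne_zero hrhs hsq

lemma vertex_start {dim : ℕ} (p : ℕ → EuclideanSpace ℝ (Fin dim)) (j : ℕ) (hj : j ≤ 3) :
    ‖p j - p 0‖ ≤ polyLength p j := by
  interval_cases j
  · simp [polyLength]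
  · simp [polyLength, Finset.sum_range_succ]
  · have t := dist_triangle (p 2) (p 1) (p 0)
    simp only [dist_eq_norm] at t
    simp only [polyLength, Finset.sum_range_succ, Finset.sum_range_zero]
    linarith
  · have t := dist_triangle4 (p 3) (p 2) (p 1) (p 0)
    simp only [dist_eq_norm] at t
    simp only [polyLength, Finset.sum_range_succ, Finset.sum_range_zero]
    linarith

lemma vertex_end {dim : ℕ} (p : ℕ → EuclideanSpace ℝ (Fin dim)) (j : ℕ) (hj : j ≤ 3) :
    ‖p j - p 3‖ ≤ polyLength p 3 - polyLength p j := by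
  interval_cases j
  · have t := dist_triangle4 (p 0) (p 1) (p 2) (p 3)
    simp only [dist_eq_norm] at t
    simp only [polyLength, Finset.sum_range_succ, Finset.sum_range_zero]
    rw [norm_sub_rev]
    have a1 := norm_sub_rev (p 0) (p 1)
    have a2 := norm_sub_rev (p 1) (p 2)
    have a3 := norm_sub_rev (p 2) (p 3)
    linarith [norm_sub_rev (p 3) (p 0)]
  · have t := dist_triangle (p 1) (p 2) (p 3)
    simp only [dist_eq_norm] at t
    simp only [polyLength, Finset.sum_range_succ, Finset.sum_range_zero]
    linarith [norm_sub_rev (p 1) (p 2), norm_sub_rev (p 2) (p 3)]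
  · simp only [polyLength, Finset.sum_range_succ, Finset.sum_range_zero]
    linarith [norm_sub_rev (p 2) (p 3)]
  · simp [polyLength]

set_option maxHeartbeats 2000000 in
lemma step (p q : ℕ → EuclideanSpace ℝ (Fin 2)) (v1 v2 : EuclideanSpace ℝ (Fin 2))
    (γ δ : ℝ) (hγ : 1/2 < γ) (hγ1 : γ ≤ 1) (hδ0 : 0 ≤ δ) (hδ : δ^2 = 2*(1-γ))
    (hg : ⟪v1, v2⟫ = γ * (‖v1‖ * ‖v2‖))
    (hclo : p 3 = p 0)
    (hK : ∀ k ≤ 3, ∃ a b : ℝ, 0 ≤ a ∧ 0 ≤ b ∧ p k - p 0 = a • v1 + b • v2)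
    (hres : Respaces 3 p q) :
    q 0 = p 0 ∧ q 3 = p 0 ∧
    (∀ k ≤ 3, ∃ a b : ℝ, 0 ≤ a ∧ 0 ≤ b ∧ q k - p 0 = a • v1 + b • v2) ∧
    polyLength q 3 ≤ (2 + δ)/3 * polyLength p 3 := by
  have hγ0 : (0:ℝ) ≤ γ := by linarith
  rcases hres with ⟨hL, hq⟩ | ⟨hL, P, hP, hq⟩
  · have e0 := hq 0 (by norm_num)
    have e1 := hq 1 (by norm_num)
    have e2 := hq 2 (by norm_num)
    have e3 := hq 3 le_rfl
    refine ⟨e0, e3.trans hclo, fun k hk => by rw [hq k hk]; exact hK k hk, ?_⟩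
    have hEq : polyLength q 3 = polyLength p 3 := by
      simp [polyLength, Finset.sum_range_succ, e0, e1, e2, e3]
    rw [hEq, hL]
    simp
  · have hd0 : polyLength p 0 = 0 := by simp [polyLength]
    have h01 : polyLength p 0 ≤ polyLength p 1 := polyLength_mono p (by norm_num)
    have h12 : polyLength p 1 ≤ polyLength p 2 := polyLength_mono p (by norm_num)
    have h23 : polyLength p 2 ≤ polyLength p 3 := polyLength_mono p (by norm_num)
    -- q 0 = p 0
    have hq0 : q 0 = p 0 := by
      have h := hP 1 le_rfl (by norm_num) 0 le_rfl zero_le_one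
      have e := hq 0 (by norm_num)
      norm_num [hd0] at h e
      rw [e, h]
    -- q 3 = p 0
    have hq3 : q 3 = p 0 := by
      have h := hP 3 (by norm_num) le_rfl 1 zero_le_one le_rfl
      have e := hq 3 le_rfl
      norm_num at h e
      rw [e, h, hclo]
    -- locate q 1
    obtain ⟨k, hk1, hk3, t, ht0, ht1, hteq⟩ :=
      locate (fun i => polyLength p i) h12 h23 (polyLength p 3 / 3)
        (by simp only [hd0]; positivity) (by linarith)
    have hq1 : q 1 = (1 - t) • p (k - 1) + t • p k := by
      have e := hq 1 (by norm_num)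
      norm_num at e
      rw [e, ← hteq]
      exact hP k hk1 hk3 t ht0 ht1
    have hcomb1 : q 1 - p 0 = (1 - t) • (p (k - 1) - p 0) + t • (p k - p 0) := by
      rw [hq1]; module
    have hr1 : ‖q 1 - p 0‖ ≤ polyLength p 3 / 3 := by
      have hvs1 := vertex_start p (k - 1) (by omega)
      have hvs2 := vertex_start p k (by omega)
      have htr : ‖q 1 - p 0‖ ≤ (1 - t) * ‖p (k - 1) - p 0‖ + t * ‖p k - p 0‖ := by
        rw [hcomb1]
        refine (norm_add_le _ _).trans ?_
        rw [norm_smul, norm_smul, Real.norm_of_nonneg (by linarith), Real.norm_of_nonneg ht0]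
      have hb1 : (1 - t) * ‖p (k - 1) - p 0‖ ≤ (1 - t) * polyLength p (k - 1) :=
        mul_le_mul_of_nonneg_left hvs1 (by linarith)
      have hb2 : t * ‖p k - p 0‖ ≤ t * polyLength p k :=
        mul_le_mul_of_nonneg_left hvs2 ht0
      linarith
    have hcone1 : ∃ a b : ℝ, 0 ≤ a ∧ 0 ≤ b ∧ q 1 - p 0 = a • v1 + b • v2 := by
      obtain ⟨a1, b1, ha1, hb1, he1⟩ := hK (k - 1) (by omega)
      obtain ⟨a2, b2, ha2, hb2, he2⟩ := hK k (by omega)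
      refine ⟨(1-t)*a1 + t*a2, (1-t)*b1 + t*b2, ?_, ?_, ?_⟩
      · have h1t : (0:ℝ) ≤ 1 - t := by linarith
        positivity
      · have h1t : (0:ℝ) ≤ 1 - t := by linarith
        positivity
      · rw [hcomb1, he1, he2]; module
    -- locate q 2
    obtain ⟨k', hk1', hk3', t', ht0', ht1', hteq'⟩ :=
      locate (fun i => polyLength p i) h12 h23 (2 * polyLength p 3 / 3)
        (by simp only [hd0]; positivity) (by linarith)
    have hq2 : q 2 = (1 - t') • p (k' - 1) + t' • p k' := by
      have e := hq 2 (by norm_num)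
      norm_num at e
      rw [e, ← hteq']
      exact hP k' hk1' hk3' t' ht0' ht1'
    have hcomb2 : q 2 - p 3 = (1 - t') • (p (k' - 1) - p 3) + t' • (p k' - p 3) := by
      rw [hq2]; module
    have hcomb2' : q 2 - p 0 = (1 - t') • (p (k' - 1) - p 0) + t' • (p k' - p 0) := by
      rw [hq2]; module
    have hr2 : ‖q 2 - p 0‖ ≤ polyLength p 3 / 3 := by
      have hvs1 := vertex_end p (k' - 1) (by omega)
      have hvs2 := vertex_end p k' (by omega)
      have htr : ‖q 2 - p 3‖ ≤ (1 - t') * ‖p (k' - 1) - p 3‖ + t' * ‖p k' - p 3‖ := by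
        rw [hcomb2]
        refine (norm_add_le _ _).trans ?_
        rw [norm_smul, norm_smul, Real.norm_of_nonneg (by linarith), Real.norm_of_nonneg ht0']
      have hb1 : (1 - t') * ‖p (k' - 1) - p 3‖ ≤ (1 - t') * (polyLength p 3 - polyLength p (k' - 1)) :=
        mul_le_mul_of_nonneg_left hvs1 (by linarith)
      have hb2 : t' * ‖p k' - p 3‖ ≤ t' * (polyLength p 3 - polyLength p k') :=
        mul_le_mul_of_nonneg_left hvs2 ht0'
      have hre : ‖q 2 - p 0‖ = ‖q 2 - p 3‖ := by rw [hclo]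
      rw [hre]
      nlinarith [hteq']
    have hcone2 : ∃ a b : ℝ, 0 ≤ a ∧ 0 ≤ b ∧ q 2 - p 0 = a • v1 + b • v2 := by
      obtain ⟨a1, b1, ha1, hb1, he1⟩ := hK (k' - 1) (by omega)
      obtain ⟨a2, b2, ha2, hb2, he2⟩ := hK k' (by omega)
      refine ⟨(1-t')*a1 + t'*a2, (1-t')*b1 + t'*b2, ?_, ?_, ?_⟩
      · have h1t : (0:ℝ) ≤ 1 - t' := by linarith
        positivity
      · have h1t : (0:ℝ) ≤ 1 - t' := by linarith
        positivity
      · rw [hcomb2', he1, he2]; module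
    -- cone membership of all vertices of q
    have hconeAll : ∀ k ≤ 3, ∃ a b : ℝ, 0 ≤ a ∧ 0 ≤ b ∧ q k - p 0 = a • v1 + b • v2 := by
      intro j hj
      interval_cases j
      · exact ⟨0, 0, le_rfl, le_rfl, by simp [hq0]⟩
      · exact hcone1
      · exact hcone2
      · exact ⟨0, 0, le_rfl, le_rfl, by simp [hq3]⟩
    refine ⟨hq0, hq3, hconeAll, ?_⟩
    -- length bound
    have hLq : polyLength q 3 = ‖q 1 - p 0‖ + ‖q 2 - q 1‖ + ‖q 2 - p 0‖ := by
      simp only [polyLength, Finset.sum_range_succ, Finset.sum_range_zero, hq0, hq3]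
      rw [norm_sub_rev (p 0) (q 2)]
      ring
    have hIuv : γ * (‖q 1 - p 0‖ * ‖q 2 - p 0‖) ≤ ⟪q 1 - p 0, q 2 - p 0⟫ :=
      coneInner hγ0 hγ1 hg hcone1 hcone2
    have hfin : (2 + δ)/3 * polyLength p 3 = 2*(polyLength p 3/3) + δ*(polyLength p 3/3) := by
      ring
    rcases le_or_gt ‖q 1 - p 0‖ ‖q 2 - p 0‖ with hr | hr
    · have hch := chord hγ hδ0 hδ hIuv hr
      have hre : ‖q 2 - q 1‖ = ‖(q 1 - p 0) - (q 2 - p 0)‖ := by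
        rw [norm_sub_rev]
        congr 1
        abel
      rw [hLq, hre]
      have hmul : δ * ‖q 1 - p 0‖ ≤ δ * (polyLength p 3/3) := mul_le_mul_of_nonneg_left hr1 hδ0
      linarith
    · have hIvu : γ * (‖q 2 - p 0‖ * ‖q 1 - p 0‖) ≤ ⟪q 2 - p 0, q 1 - p 0⟫ :=
        coneInner hγ0 hγ1 hg hcone2 hcone1
      have hch := chord hγ hδ0 hδ hIvu hr.le
      have hre : ‖q 2 - q 1‖ = ‖(q 2 - p 0) - (q 1 - p 0)‖ := by
        congr 1
        abel
      rw [hLq, hre]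
      have hmul : δ * ‖q 2 - p 0‖ ≤ δ * (polyLength p 3/3) := mul_le_mul_of_nonneg_left hr2 hδ0
      linarith


/-- For a nondegenerate triangle, viewed as a closed polygonal curve, whose
angle at the starting vertex `p 0` is less than `π/3`, the iterated arclength
respacings converge to a single point. -/
theorem stmt17 (p : ℕ → EuclideanSpace ℝ (Fin 2))
    (hclosed : p 3 = p 0)
    (hncol : ¬ Collinear ℝ ({p 0, p 1, p 2} : Set (EuclideanSpace ℝ (Fin 2))))
    (hangle : EuclideanGeometry.angle (p 1) (p 0) (p 2) < Real.pi / 3)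
    (c : ℕ → ℕ → EuclideanSpace ℝ (Fin 2))
    (hc0 : ∀ k ≤ 3, c 0 k = p k)
    (hstep : ∀ n, Respaces 3 (c n) (c (n + 1))) :
    ∃ q : EuclideanSpace ℝ (Fin 2),
      ∀ k ≤ 3, Tendsto (fun n => c n k) atTop (nhds q) := by
  set v1 : EuclideanSpace ℝ (Fin 2) := p 1 - p 0 with hv1
  set v2 : EuclideanSpace ℝ (Fin 2) := p 2 - p 0 with hv2
  set γ : ℝ := ⟪v1, v2⟫ / (‖v1‖ * ‖v2‖) with hγdef
  have harc : Real.arccos γ < Real.pi / 3 := by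
    have : EuclideanGeometry.angle (p 1) (p 0) (p 2) = Real.arccos γ := by
      rw [EuclideanGeometry.angle, InnerProductGeometry.angle, hγdef, hv1, hv2]
      norm_num [vsub_eq_sub]
    linarith [this ▸ hangle]
  have hγ1 : γ ≤ 1 := by
    rw [hγdef]
    rcases eq_or_ne (‖v1‖ * ‖v2‖) 0 with h | h
    · rw [h, div_zero]; norm_num
    · have := abs_real_inner_div_norm_mul_norm_le_one v1 v2
      exact (abs_le.1 this).2
  have hγm1 : -1 ≤ γ := by
    rw [hγdef]
    rcases eq_or_ne (‖v1‖ * ‖v2‖) 0 with h | h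
    · rw [h, div_zero]; norm_num
    · have := abs_real_inner_div_norm_mul_norm_le_one v1 v2
      exact (abs_le.1 this).1
  have hγ : 1/2 < γ := by
    have h2 : Real.cos (Real.pi/3) < Real.cos (Real.arccos γ) := by
      apply Real.cos_lt_cos_of_nonneg_of_le_pi (Real.arccos_nonneg _) ?_ harc
      linarith [Real.pi_pos]
    rw [Real.cos_arccos hγm1 hγ1, Real.cos_pi_div_three] at h2
    linarith
  have hγ0 : (0:ℝ) ≤ γ := by linarith
  have hg : ⟪v1, v2⟫ = γ * (‖v1‖ * ‖v2‖) := by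
    rcases eq_or_ne (‖v1‖ * ‖v2‖) 0 with h | h
    · exfalso
      rw [hγdef, h, div_zero] at hγ
      linarith
    · rw [hγdef]
      field_simp
      rw [mul_assoc, mul_div_assoc, div_self h, mul_one]
  set δ : ℝ := Real.sqrt (2*(1-γ)) with hδdef
  have hδ0 : (0:ℝ) ≤ δ := Real.sqrt_nonneg _
  have hδsq : δ^2 = 2*(1-γ) := Real.sq_sqrt (by linarith)
  have hδ1 : δ < 1 := by nlinarith
  have hlam0 : (0:ℝ) ≤ (2 + δ)/3 := by linarith
  have hlam1 : (2 + δ)/3 < 1 := by linarith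
  -- invariant
  have inv : ∀ n, c n 0 = p 0 ∧ c n 3 = p 0 ∧
      (∀ k ≤ 3, ∃ a b : ℝ, 0 ≤ a ∧ 0 ≤ b ∧ c n k - p 0 = a • v1 + b • v2) ∧
      polyLength (c n) 3 ≤ ((2 + δ)/3)^n * polyLength (c 0) 3 := by
    intro n
    induction n with
    | zero =>
      refine ⟨hc0 0 (by norm_num), (hc0 3 le_rfl).trans hclosed, ?_, by norm_num⟩
      intro k hk
      interval_cases k
      · exact ⟨0, 0, le_rfl, le_rfl, by simp [hc0 0 (by norm_num)]⟩
      · exact ⟨1, 0, zero_le_one, le_rfl, by simp [hc0 1 (by norm_num), hv1]⟩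
      · exact ⟨0, 1, le_rfl, zero_le_one, by simp [hc0 2 (by norm_num), hv2]⟩
      · exact ⟨0, 0, le_rfl, le_rfl, by simp [(hc0 3 le_rfl).trans hclosed]⟩
    | succ n ih =>
      obtain ⟨h0, h3, hcone, hlen⟩ := ih
      have hclo' : c n 3 = c n 0 := h3.trans h0.symm
      have hK' : ∀ k ≤ 3, ∃ a b : ℝ, 0 ≤ a ∧ 0 ≤ b ∧ c n k - c n 0 = a • v1 + b • v2 := by
        intro k hk
        rw [h0]
        exact hcone k hk
      obtain ⟨s0, s3, scone, slen⟩ :=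
        step (c n) (c (n+1)) v1 v2 γ δ hγ hγ1 hδ0 hδsq hg hclo' hK' (hstep n)
      refine ⟨s0.trans h0, s3.trans h0, ?_, ?_⟩
      · intro k hk
        obtain ⟨a, b, ha, hb, he⟩ := scone k hk
        exact ⟨a, b, ha, hb, by rw [← h0]; exact he⟩
      · calc polyLength (c (n+1)) 3 ≤ (2 + δ)/3 * polyLength (c n) 3 := slen
          _ ≤ (2 + δ)/3 * (((2 + δ)/3)^n * polyLength (c 0) 3) :=
              mul_le_mul_of_nonneg_left hlen hlam0
          _ = ((2 + δ)/3)^(n+1) * polyLength (c 0) 3 := by ring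
  refine ⟨p 0, fun k hk => ?_⟩
  rw [tendsto_iff_norm_sub_tendsto_zero]
  have hbound : ∀ n, ‖c n k - p 0‖ ≤ ((2 + δ)/3)^n * polyLength (c 0) 3 := by
    intro n
    obtain ⟨h0, _, _, hlen⟩ := inv n
    calc ‖c n k - p 0‖ = ‖c n k - c n 0‖ := by rw [h0]
      _ ≤ polyLength (c n) k := vertex_start (c n) k hk
      _ ≤ polyLength (c n) 3 := polyLength_mono _ hk
      _ ≤ ((2 + δ)/3)^n * polyLength (c 0) 3 := hlen
  have htend : Tendsto (fun n => ((2 + δ)/3)^n * polyLength (c 0) 3) atTop (nhds 0) := by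
    have := (tendsto_pow_atTop_nhds_zero_of_lt_one hlam0 hlam1).mul_const (polyLength (c 0) 3)
    simpa using this
  exact squeeze_zero (fun n => norm_nonneg _) hbound htend
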